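/- Let 𝓗 be a finite-dimensional complex inner product space, let H and X be self-adjoint linear operators on 𝓗 with operator norm ‖X‖ ≤ L/2 for some real L ≥ 0. Let J₊ and J₋ be disjoint intervals both contained in an interval J ⊂ ℝ, and let f₊, f₋ : ℝ → ℝ satisfy 0 ≤ f_± ≤ χ_{J_±}. Define F_± := f_±(H) and Q := χ_J(H) via the spectral decomposition of H. Then tr(F₋ X F₊ X F₋) ≤ (L²/4) [ (tr Q)² − tr Q ]. -/

import Mathlib

open scoped InnerProductSpace

noncomputable section


lemma trace_eq_sum_inner' {𝓗 : Type} [NormedAddCommGroup 𝓗] [InnerProductSpace ℂ 𝓗]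
    [FiniteDimensional ℂ 𝓗] {ι : Type} [Fintype ι] [DecidableEq ι]
    (b : OrthonormalBasis ι ℂ 𝓗) (T : 𝓗 →L[ℂ] 𝓗) :
    LinearMap.trace ℂ 𝓗 (T : 𝓗 →ₗ[ℂ] 𝓗) = ∑ i, ⟪b i, T (b i)⟫_ℂ := by
  rw [LinearMap.trace_eq_matrix_trace ℂ b.toBasis, Matrix.trace]
  congr 1
  ext i
  simp [Matrix.diag, LinearMap.toMatrix_apply, b.coe_toBasis_repr_apply,
    b.repr_apply_apply, b.coe_toBasis]

lemma diag_inner {𝓗 : Type} [NormedAddCommGroup 𝓗] [InnerProductSpace ℂ 𝓗]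
    [FiniteDimensional ℂ 𝓗] {ι : Type} [Fintype ι] [DecidableEq ι]
    (b : OrthonormalBasis ι ℂ 𝓗) (F : 𝓗 →L[ℂ] 𝓗) (r : ι → ℝ)
    (hF : ∀ i, F (b i) = ((r i : ℝ) : ℂ) • b i) (i : ι) (y : 𝓗) :
    ⟪b i, F y⟫_ℂ = ((r i : ℝ) : ℂ) * ⟪b i, y⟫_ℂ := by
  conv_lhs => rw [← b.sum_repr y]
  simp only [map_sum, map_smul, inner_sum, inner_smul_right, hF,
    orthonormal_iff_ite.mp b.orthonormal, mul_ite, mul_one, mul_zero,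
    Finset.sum_ite_eq, Finset.mem_univ, if_true]
  rw [b.repr_apply_apply]
  ring

/-- **The deterministic trace inequality (4.37)–(4.39)**: for selfadjoint `H`, `X`
on a finite-dimensional inner product space with `‖X‖ ≤ L/2`, disjoint intervals
`J₊, J₋ ⊆ J`, functions `0 ≤ f_± ≤ χ_{J_±}`, and `F_± = f_±(H)`, `Q = χ_J(H)`
defined through the spectral decomposition of `H`, one has
`tr(F₋ X F₊ X F₋) ≤ (L²/4) [(tr Q)² - tr Q]`. -/
theorem trace_inequality_finite_volume
    {𝓗 : Type} [NormedAddCommGroup 𝓗] [InnerProductSpace ℂ 𝓗] [FiniteDimensional ℂ 𝓗]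
    {ι : Type} [Fintype ι]
    (b : OrthonormalBasis ι ℂ 𝓗) (μ : ι → ℝ)
    (H X Fp Fm Q : 𝓗 →L[ℂ] 𝓗)
    (hH : ∀ i, H (b i) = (μ i : ℂ) • b i)
    (hX : IsSelfAdjoint X)
    (L : ℝ) (hL : 0 ≤ L) (hXnorm : ‖X‖ ≤ L / 2)
    (J Jp Jm : Set ℝ)
    (hJ : J.OrdConnected) (hJp : Jp.OrdConnected) (hJm : Jm.OrdConnected)
    (hdisj : Disjoint Jp Jm) (hpsub : Jp ⊆ J) (hmsub : Jm ⊆ J)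
    (fp fm : ℝ → ℝ)
    (hfp0 : ∀ t, 0 ≤ fp t) (hfp1 : ∀ t, fp t ≤ Jp.indicator 1 t)
    (hfm0 : ∀ t, 0 ≤ fm t) (hfm1 : ∀ t, fm t ≤ Jm.indicator 1 t)
    (hFp : ∀ i, Fp (b i) = ((fp (μ i) : ℝ) : ℂ) • b i)
    (hFm : ∀ i, Fm (b i) = ((fm (μ i) : ℝ) : ℂ) • b i)
    (hQ : ∀ i, Q (b i) = ((J.indicator 1 (μ i) : ℝ) : ℂ) • b i) :
    (LinearMap.trace ℂ 𝓗 ((Fm ∘L X ∘L Fp ∘L X ∘L Fm : 𝓗 →L[ℂ] 𝓗) : 𝓗 →ₗ[ℂ] 𝓗)).re ≤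
      L ^ 2 / 4 *
        ((LinearMap.trace ℂ 𝓗 (Q : 𝓗 →ₗ[ℂ] 𝓗)).re ^ 2
          - (LinearMap.trace ℂ 𝓗 (Q : 𝓗 →ₗ[ℂ] 𝓗)).re) := by
  classical
  haveI : CompleteSpace 𝓗 := FiniteDimensional.complete ℂ 𝓗
  set d : ι → ℝ := fun i => J.indicator 1 (μ i) with hd
  have hd01 : ∀ i, d i = 0 ∨ d i = 1 := by
    intro i
    by_cases h : μ i ∈ J
    · right; simp [hd, Set.indicator_of_mem h]
    · left; simp [hd, Set.indicator_of_notMem h]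
  have hd0 : ∀ i, 0 ≤ d i := fun i => by rcases hd01 i with h | h <;> simp [h]
  -- trace of Q
  have hQtr : (LinearMap.trace ℂ 𝓗 (Q : 𝓗 →ₗ[ℂ] 𝓗)).re = ∑ i, d i := by
    rw [trace_eq_sum_inner' b Q]
    have : ∀ i, ⟪b i, Q (b i)⟫_ℂ = ((d i : ℝ) : ℂ) := by
      intro i
      rw [hQ i, inner_smul_right, inner_self_eq_norm_sq_to_K]
      simp [b.orthonormal.1 i, hd]
    simp [this, Complex.re_sum]
  -- selfadjointness of X as an inner product identity
  have hXad : ∀ v w : 𝓗, ⟪v, X w⟫_ℂ = ⟪X v, w⟫_ℂ := by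
    intro v w
    conv_rhs => rw [← hX.adjoint_eq]
    rw [ContinuousLinearMap.adjoint_inner_left]
  have hconj : ∀ z : ℂ, (starRingEnd ℂ) z * z = ((‖z‖ ^ 2 : ℝ) : ℂ) := by
    intro z
    rw [mul_comm, Complex.mul_conj]
    norm_cast
    rw [Complex.normSq_eq_norm_sq]
  -- the diagonal matrix elements of the product
  have hcomp : ∀ i, ⟪b i, (Fm ∘L X ∘L Fp ∘L X ∘L Fm : 𝓗 →L[ℂ] 𝓗) (b i)⟫_ℂ
      = ((fm (μ i) ^ 2 * ∑ j, fp (μ j) * ‖⟪b j, X (b i)⟫_ℂ‖ ^ 2 : ℝ) : ℂ) := by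
    intro i
    simp only [ContinuousLinearMap.comp_apply]
    rw [diag_inner b Fm (fun k => fm (μ k)) hFm i, hFm i]
    simp only [map_smul, inner_smul_right]
    rw [hXad]
    rw [← b.sum_inner_mul_inner (X (b i)) (Fp (X (b i)))]
    have key : ∀ j, ⟪X (b i), b j⟫_ℂ * ⟪b j, Fp (X (b i))⟫_ℂ
        = ((fp (μ j) * ‖⟪b j, X (b i)⟫_ℂ‖ ^ 2 : ℝ) : ℂ) := by
      intro j
      have hz : ⟪X (b i), b j⟫_ℂ = (starRingEnd ℂ) ⟪b j, X (b i)⟫_ℂ :=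
        (inner_conj_symm (X (b i)) (b j)).symm
      rw [diag_inner b Fp (fun k => fp (μ k)) hFp j, hz, mul_left_comm, hconj]
      push_cast
      ring
    rw [Finset.sum_congr rfl (fun j _ => key j)]
    push_cast
    ring
  -- real form of the LHS trace
  have hTtr : (LinearMap.trace ℂ 𝓗 ((Fm ∘L X ∘L Fp ∘L X ∘L Fm : 𝓗 →L[ℂ] 𝓗) : 𝓗 →ₗ[ℂ] 𝓗)).re
      = ∑ i, fm (μ i) ^ 2 * ∑ j, fp (μ j) * ‖⟪b j, X (b i)⟫_ℂ‖ ^ 2 := by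
    rw [trace_eq_sum_inner' b, Complex.re_sum]
    exact Finset.sum_congr rfl fun i _ => by rw [hcomp i, Complex.ofReal_re]
  rw [hTtr, hQtr]
  -- pointwise bounds on the functions
  have hfm_le_d : ∀ i, fm (μ i) ≤ d i := fun i =>
    (hfm1 (μ i)).trans (Set.indicator_le_indicator_of_subset hmsub (fun a => zero_le_one) (μ i))
  have hfp_le_d : ∀ i, fp (μ i) ≤ d i := fun i =>
    (hfp1 (μ i)).trans (Set.indicator_le_indicator_of_subset hpsub (fun a => zero_le_one) (μ i))
  have hfm_le_one : ∀ t, fm t ≤ 1 := by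
    intro t
    refine (hfm1 t).trans ?_
    by_cases h : t ∈ Jm <;> simp [Set.indicator_of_mem, Set.indicator_of_notMem, h]
  -- norm bound on matrix elements
  have hc : ∀ i j, ‖⟪b j, X (b i)⟫_ℂ‖ ^ 2 ≤ L ^ 2 / 4 := by
    intro i j
    have h1 : ‖⟪b j, X (b i)⟫_ℂ‖ ≤ L / 2 := by
      calc ‖⟪b j, X (b i)⟫_ℂ‖ ≤ ‖b j‖ * ‖X (b i)‖ := norm_inner_le_norm _ _
        _ ≤ 1 * (‖X‖ * ‖b i‖) := by
            gcongr
            · exact le_of_eq (b.orthonormal.1 j)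
            · exact X.le_opNorm _
        _ ≤ L / 2 := by rw [b.orthonormal.1 i]; simpa using hXnorm
    calc ‖⟪b j, X (b i)⟫_ℂ‖ ^ 2 ≤ (L / 2) ^ 2 := by
          exact pow_le_pow_left₀ (norm_nonneg _) h1 2
      _ = L ^ 2 / 4 := by ring
  -- diagonal terms vanish
  have hdiag : ∀ i, fm (μ i) * fp (μ i) = 0 := by
    intro i
    by_cases h : fm (μ i) = 0
    · simp [h]
    have hmem : μ i ∈ Jm := by
      by_contra hmem
      exact h (le_antisymm (by simpa [Set.indicator_of_notMem hmem] using hfm1 (μ i)) (hfm0 _))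
    have hpz : fp (μ i) = 0 := by
      have hnot : μ i ∉ Jp := fun hp => hdisj.ne_of_mem hp hmem rfl
      exact le_antisymm (by simpa [Set.indicator_of_notMem hnot] using hfp1 (μ i)) (hfp0 _)
    simp [hpz]
  -- main estimate
  have main : ∑ i, fm (μ i) ^ 2 * ∑ j, fp (μ j) * ‖⟪b j, X (b i)⟫_ℂ‖ ^ 2
      ≤ ∑ i, ∑ j, (if i = j then (0:ℝ) else L ^ 2 / 4 * (d i * d j)) := by
    have := fun i => Finset.mul_sum (Finset.univ : Finset ι)
      (fun j => fp (μ j) * ‖⟪b j, X (b i)⟫_ℂ‖ ^ 2) (fm (μ i) ^ 2)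
    simp only [this]
    refine Finset.sum_le_sum fun i _ => Finset.sum_le_sum fun j _ => ?_
    by_cases h : i = j
    · subst h
      have h0 : fm (μ i) ^ 2 * (fp (μ i) * ‖⟪b i, X (b i)⟫_ℂ‖ ^ 2) = 0 := by
        rcases mul_eq_zero.mp (hdiag i) with h | h <;> simp [h, pow_two]
      rw [if_pos rfl]
      exact le_of_eq h0
    · simp only [if_neg h]
      have h1 : fm (μ i) ^ 2 ≤ d i := by
        nlinarith [hfm0 (μ i), hfm_le_one (μ i), hfm_le_d i]
      calc fm (μ i) ^ 2 * (fp (μ j) * ‖⟪b j, X (b i)⟫_ℂ‖ ^ 2)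
          ≤ d i * (d j * (L ^ 2 / 4)) := by
            apply mul_le_mul h1 _ _ (hd0 i)
            · exact mul_le_mul (hfp_le_d j) (hc i j) (by positivity) (hd0 j)
            · exact mul_nonneg (hfp0 _) (by positivity)
        _ = L ^ 2 / 4 * (d i * d j) := by ring
  -- evaluate the right-hand double sum
  have hsplit : ∀ i j : ι, (if i = j then (0:ℝ) else L ^ 2 / 4 * (d i * d j))
      = L ^ 2 / 4 * (d i * d j) - (if i = j then L ^ 2 / 4 * (d i * d j) else 0) := by
    intro i j; split <;> ring
  have hrhs : ∑ i, ∑ j, (if i = j then (0:ℝ) else L ^ 2 / 4 * (d i * d j))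
      = L ^ 2 / 4 * ((∑ i, d i) ^ 2 - ∑ i, d i) := by
    simp only [hsplit, Finset.sum_sub_distrib, Finset.sum_ite_eq, Finset.mem_univ, if_true]
    have e1 : ∑ i, ∑ j, (L ^ 2 / 4 * (d i * d j)) = L ^ 2 / 4 * (∑ i, d i) ^ 2 := by
      simp only [← Finset.mul_sum, ← Finset.sum_mul]
      ring
    have e2 : ∑ i, (L ^ 2 / 4 * (d i * d i)) = L ^ 2 / 4 * ∑ i, d i := by
      rw [Finset.mul_sum]
      exact Finset.sum_congr rfl fun i _ => by
        rcases hd01 i with h | h <;> simp [h]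
    rw [e1, e2]; ring
  exact le_trans main hrhs.le

end
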